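/- Let S be a real symmetric n×n matrix with n distinct eigenvalues, and let f̃ : ℝ → ℝ be a function such that for any two eigenvalues μ < μ' of S one has |f̃(μ)| < |f̃(μ')|. Let A be the real symmetric matrix defined spectrally by A v = f̃(μ) v whenever S v = μ v (equivalently, A = U f̃(D) Uᵀ for any orthogonal diagonalization S = U D Uᵀ with D diagonal, applying f̃ entrywise to the diagonal of D). Assume A is almost invertible, let A = Q⋆R⋆ be its Q⋆R⋆ factorization, and set F := Q⋆ᵀ S Q⋆. Then for every r = 1,…,n−1, the sum of the first r diagonal entries of F is ≥ the sum of the first r diagonal entries of S; and if F_{1,1} = S_{1,1}, then S_{1,j} = 0 for all j > 1. -/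

import Mathlib

open Matrix Filter Topology

attribute [local instance] Matrix.normedAddCommGroup Matrix.normedSpace

noncomputable section

attribute [local instance] Classical.propDecidable

/-- The first `n+1` columns of the `(n+2)×(n+2)` matrix `M` are linearly independent,
i.e. `M` is *almost invertible*. -/
def AlmostInv {n : ℕ} (M : Matrix (Fin (n+2)) (Fin (n+2)) ℝ) : Prop :=
  LinearIndependent ℝ (fun j : Fin (n+1) => fun i => M i j.castSucc)

/-- `M = Q⋆ R⋆` with `Q⋆` orthogonal of determinant one and `R⋆` upper triangular
with positive diagonal except possibly at the last entry. -/
def IsQsRs {n : ℕ} (M Q R : Matrix (Fin (n+2)) (Fin (n+2)) ℝ) : Prop :=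
  Qᵀ * Q = 1 ∧ Q.det = 1 ∧ (∀ i j : Fin (n+2), j < i → R i j = 0) ∧
    (∀ i : Fin (n+1), 0 < R i.castSucc i.castSucc) ∧ M = Q * R

/-- `M = Q R` with `Q` orthogonal and `R` upper triangular with positive diagonal. -/
def IsQR {n : ℕ} (M Q R : Matrix (Fin (n+2)) (Fin (n+2)) ℝ) : Prop :=
  Qᵀ * Q = 1 ∧ (∀ i j : Fin (n+2), j < i → R i j = 0) ∧
    (∀ i : Fin (n+2), 0 < R i i) ∧ M = Q * R

/-- `E_n = diag(1, …, 1, -1)`. -/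
def En (n : ℕ) : Matrix (Fin (n+2)) (Fin (n+2)) ℝ :=
  Matrix.diagonal (fun i => if i = Fin.last (n+1) then -1 else 1)

/-- The signed shifted QR step `F_s(T) = Q⋆ᵀ T Q⋆` where `T - s I = Q⋆ R⋆`. -/
def Fs {n : ℕ} (s : ℝ) (T : Matrix (Fin (n+2)) (Fin (n+2)) ℝ) :
    Matrix (Fin (n+2)) (Fin (n+2)) ℝ :=
  if h : ∃ Q R, IsQsRs (T - s • 1) Q R then (h.choose)ᵀ * T * h.choose else 0

/-- The (plain) shifted QR step `Φ(T, s) = Qᵀ T Q` where `T - s I = Q R`. -/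
def Phi {n : ℕ} (T : Matrix (Fin (n+2)) (Fin (n+2)) ℝ) (s : ℝ) :
    Matrix (Fin (n+2)) (Fin (n+2)) ℝ :=
  if h : ∃ Q R, IsQR (T - s • 1) Q R then (h.choose)ᵀ * T * h.choose else 0

/-- `T` is symmetric and tridiagonal. -/
def SymTridiag {n : ℕ} (T : Matrix (Fin (n+2)) (Fin (n+2)) ℝ) : Prop :=
  Tᵀ = T ∧ ∀ i j : Fin (n+2), (i.val + 1 < j.val ∨ j.val + 1 < i.val) → T i j = 0

/-- `b(T)`, the lowest subdiagonal entry `T_{n, n-1}` (1-based). -/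
def lowb {n : ℕ} (T : Matrix (Fin (n+2)) (Fin (n+2)) ℝ) : ℝ :=
  T (Fin.last (n+1)) ⟨n, by omega⟩

/-- `T` is unreduced: all subdiagonal entries are nonzero. -/
def Unreduced {n : ℕ} (T : Matrix (Fin (n+2)) (Fin (n+2)) ℝ) : Prop :=
  ∀ i : Fin (n+1), T i.succ i.castSucc ≠ 0

/-- `𝒯_Λ`: real symmetric tridiagonal matrices with the same characteristic polynomial
as `Λ = diagonal lam`. -/
def TSet {n : ℕ} (lam : Fin (n+2) → ℝ) : Set (Matrix (Fin (n+2)) (Fin (n+2)) ℝ) :=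
  {T | SymTridiag T ∧ T.charpoly = (Matrix.diagonal lam).charpoly}

/-- The deflation neighborhood `D^i_{Λ,ε}`. -/
def Dset {n : ℕ} (lam : Fin (n+2) → ℝ) (ε : ℝ) (i : Fin (n+2)) :
    Set (Matrix (Fin (n+2)) (Fin (n+2)) ℝ) :=
  {T ∈ TSet lam | |lowb T| ≤ ε ∧
    |T (Fin.last (n+1)) (Fin.last (n+1)) - lam i| ≤ Real.sqrt 2 * ε}

/-- The deflation set `D^i_{Λ,0}`. -/
def D0 {n : ℕ} (lam : Fin (n+2) → ℝ) (i : Fin (n+2)) :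
    Set (Matrix (Fin (n+2)) (Fin (n+2)) ℝ) :=
  {T ∈ TSet lam | lowb T = 0 ∧ T (Fin.last (n+1)) (Fin.last (n+1)) = lam i}

/-- The deflation domain `D^i_Λ`: matrices `T ∈ 𝒯_Λ` with `T - λ_i I` almost invertible. -/
def DD {n : ℕ} (lam : Fin (n+2) → ℝ) (i : Fin (n+2)) :
    Set (Matrix (Fin (n+2)) (Fin (n+2)) ℝ) :=
  {T ∈ TSet lam | AlmostInv (T - lam i • 1)}

/-- A simple shift strategy. -/
def SimpleShift {n : ℕ} (lam : Fin (n+2) → ℝ)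
    (σ : Matrix (Fin (n+2)) (Fin (n+2)) ℝ → ℝ) : Prop :=
  (∀ T ∈ TSet lam, σ (En n * T * En n) = σ T) ∧
  ∃ C > 0, ∀ T ∈ TSet lam, ∃ i : Fin (n+2), |σ T - lam i| ≤ C * |lowb T|

/-- The vector space of real symmetric tridiagonal matrices. -/
def STSpace (n : ℕ) : Submodule ℝ (Matrix (Fin (n+2)) (Fin (n+2)) ℝ) where
  carrier := {T | SymTridiag T}
  add_mem' := by
    rintro a b ⟨ha1, ha2⟩ ⟨hb1, hb2⟩
    refine ⟨by rw [Matrix.transpose_add, ha1, hb1], fun i j h => ?_⟩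
    simp [Matrix.add_apply, ha2 i j h, hb2 i j h]
  zero_mem' := ⟨Matrix.transpose_zero, fun i j _ => rfl⟩
  smul_mem' := by
    rintro c a ⟨ha1, ha2⟩
    refine ⟨by rw [Matrix.transpose_smul, ha1], fun i j h => ?_⟩
    simp [Matrix.smul_apply, ha2 i j h]

/-- `σ` is smooth near `A ⊆ 𝒯_Λ`: there are an open subset `U` of the vector space of
symmetric tridiagonal matrices containing `A` and a `C^∞` function on `U` agreeing with
`σ` on `U ∩ 𝒯_Λ`. -/
def SmoothNear {n : ℕ} (lam : Fin (n+2) → ℝ)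
    (σ : Matrix (Fin (n+2)) (Fin (n+2)) ℝ → ℝ)
    (A : Set (Matrix (Fin (n+2)) (Fin (n+2)) ℝ)) : Prop :=
  ∃ (U : Set (STSpace n)) (σt : STSpace n → ℝ),
    IsOpen U ∧
    (∀ T : STSpace n, (T : Matrix (Fin (n+2)) (Fin (n+2)) ℝ) ∈ A → T ∈ U) ∧
    ContDiffOn ℝ (⊤ : ℕ∞) σt U ∧
    ∀ T : STSpace n, T ∈ U → (T : Matrix (Fin (n+2)) (Fin (n+2)) ℝ) ∈ TSet lam →
      σt T = σ (T : Matrix (Fin (n+2)) (Fin (n+2)) ℝ)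

/-- The Frobenius norm `‖A‖ = √(trace(Aᵀ A))`. -/
def frobNorm {n : ℕ} (A : Matrix (Fin (n+2)) (Fin (n+2)) ℝ) : ℝ :=
  Real.sqrt (Matrix.trace (Aᵀ * A))

end

noncomputable section QRAux
attribute [local instance] Classical.propDecidable
variable {r m : ℕ}

lemma quad_inv_eq (G : Matrix (Fin r) (Fin r) ℝ) (hG : IsUnit G.det)
    (x : Fin r → ℝ) : x ⬝ᵥ G⁻¹ *ᵥ x = (G⁻¹ *ᵥ x) ⬝ᵥ G *ᵥ (G⁻¹ *ᵥ x) := by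
  have h1 : G *ᵥ (G⁻¹ *ᵥ x) = x := by
    rw [Matrix.mulVec_mulVec, Matrix.mul_nonsing_inv _ hG, Matrix.one_mulVec]
  rw [h1, dotProduct_comm]

lemma quad_inv_antitone (G M : Matrix (Fin r) (Fin r) ℝ)
    (hMs : Mᵀ = M) (hG : IsUnit G.det) (hM : IsUnit M.det)
    (hMpsd : ∀ v, 0 ≤ v ⬝ᵥ M *ᵥ v)
    (hGM : ∀ v, 0 ≤ v ⬝ᵥ (G - M) *ᵥ v) (x : Fin r → ℝ) :
    x ⬝ᵥ G⁻¹ *ᵥ x ≤ x ⬝ᵥ M⁻¹ *ᵥ x := by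
  set u := G⁻¹ *ᵥ x with hu
  set v := M⁻¹ *ᵥ x with hv
  have hGu : G *ᵥ u = x := by
    rw [hu, Matrix.mulVec_mulVec, Matrix.mul_nonsing_inv _ hG, Matrix.one_mulVec]
  have hMv : M *ᵥ v = x := by
    rw [hv, Matrix.mulVec_mulVec, Matrix.mul_nonsing_inv _ hM, Matrix.one_mulVec]
  have hsymM : ∀ a b : Fin r → ℝ, a ⬝ᵥ M *ᵥ b = b ⬝ᵥ M *ᵥ a := by
    intro a b
    rw [Matrix.dotProduct_mulVec, ← Matrix.mulVec_transpose, hMs, dotProduct_comm]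
  have e1 : x ⬝ᵥ G⁻¹ *ᵥ x = u ⬝ᵥ G *ᵥ u := quad_inv_eq G hG x
  have e2 : x ⬝ᵥ M⁻¹ *ᵥ x = v ⬝ᵥ M *ᵥ v := quad_inv_eq M hM x
  have h3 : u ⬝ᵥ M *ᵥ u ≤ u ⬝ᵥ G *ᵥ u := by
    have := hGM u; rw [Matrix.sub_mulVec, dotProduct_sub] at this; linarith
  have h4 : 0 ≤ (v - u) ⬝ᵥ M *ᵥ (v - u) := hMpsd _
  have h5 : (v - u) ⬝ᵥ M *ᵥ (v - u)
      = v ⬝ᵥ M *ᵥ v - 2 * (u ⬝ᵥ M *ᵥ v) + u ⬝ᵥ M *ᵥ u := by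
    rw [Matrix.mulVec_sub, dotProduct_sub, sub_dotProduct,
      sub_dotProduct, hsymM u v]
    ring
  have h6 : u ⬝ᵥ M *ᵥ v = u ⬝ᵥ x := by rw [hMv]
  have h7 : u ⬝ᵥ G *ᵥ u = u ⬝ᵥ x := by rw [hGu]
  nlinarith [h3, h4, h5, h6, h7, e1, e2]

lemma trace_helper (C : Matrix (Fin m) (Fin r) ℝ) (X : Matrix (Fin r) (Fin r) ℝ)
    (w : Fin m → ℝ) :
    Matrix.trace (X * (Cᵀ * Matrix.diagonal w * C)) =
      ∑ k, w k * ((C * X * Cᵀ) k k) := by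
  have h : X * (Cᵀ * Matrix.diagonal w * C) = (X * Cᵀ) * (Matrix.diagonal w * C) := by
    simp [Matrix.mul_assoc]
  rw [h, Matrix.trace_mul_comm, ← Matrix.mul_assoc, Matrix.trace]
  congr 1
  ext k
  rw [Matrix.diag]
  have : Matrix.diagonal w * C * X * Cᵀ = Matrix.diagonal w * (C * X * Cᵀ) := by
    simp [Matrix.mul_assoc]
  rw [this, Matrix.diagonal_mul]

lemma quad_helper (C : Matrix (Fin m) (Fin r) ℝ) (X : Matrix (Fin r) (Fin r) ℝ)
    (k : Fin m) : (C * X * Cᵀ) k k = (fun j => C k j) ⬝ᵥ X *ᵥ (fun j => C k j) := by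
  simp [Matrix.mul_apply, dotProduct, Matrix.mulVec, Finset.sum_mul, Finset.mul_sum]
  rw [Finset.sum_comm]
  congr 1; ext i; congr 1; ext j; ring

lemma quadform_CDC (C : Matrix (Fin m) (Fin r) ℝ) (w : Fin m → ℝ) (v : Fin r → ℝ) :
    v ⬝ᵥ (Cᵀ * Matrix.diagonal w * C) *ᵥ v = ∑ k, w k * ((C *ᵥ v) k)^2 := by
  rw [show Cᵀ * Matrix.diagonal w * C = Cᵀ * (Matrix.diagonal w * C) by rw [Matrix.mul_assoc]]
  rw [← Matrix.mulVec_mulVec, ← Matrix.mulVec_mulVec]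
  rw [Matrix.dotProduct_mulVec, Matrix.vecMul_transpose]
  rw [dotProduct]
  congr 1; ext k
  rw [Matrix.mulVec_diagonal]
  ring

lemma sym_CDC (C : Matrix (Fin m) (Fin r) ℝ) (w : Fin m → ℝ) :
    (Cᵀ * Matrix.diagonal w * C)ᵀ = Cᵀ * Matrix.diagonal w * C := by
  simp [Matrix.transpose_mul, Matrix.diagonal_transpose, Matrix.mul_assoc]

lemma sub_CDC (C : Matrix (Fin m) (Fin r) ℝ) (w w' : Fin m → ℝ) :
    Cᵀ * Matrix.diagonal w * C - Cᵀ * Matrix.diagonal w' * C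
      = Cᵀ * Matrix.diagonal (w - w') * C := by
  have h : Matrix.diagonal (w - w') = Matrix.diagonal w - Matrix.diagonal w' := by
    ext i j
    by_cases h : i = j <;> simp [Matrix.diagonal_apply, h]
  rw [h, Matrix.mul_sub, Matrix.sub_mul]

lemma threshold (C : Matrix (Fin m) (Fin r) ℝ) (hC : Cᵀ * C = 1)
    (g : Fin m → ℝ) (hg : ∀ k, 0 ≤ g k)
    (hGdet : IsUnit (Cᵀ * Matrix.diagonal g * C).det)
    (T : Finset (Fin m)) (τ : ℝ) (hτ : 0 < τ)
    (hT1 : ∀ k ∈ T, τ ≤ g k) (hT2 : ∀ k ∉ T, g k ≤ τ) :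
    ∑ k ∈ T, (C * (1 : Matrix (Fin r) (Fin r) ℝ) * Cᵀ) k k ≤
      ∑ k ∈ T, g k * ((C * (Cᵀ * Matrix.diagonal g * C)⁻¹ * Cᵀ) k k) := by
  set G := Cᵀ * Matrix.diagonal g * C with hGdef
  set m' : Fin m → ℝ := fun k => if k ∈ T then τ else g k with hm'def
  set M := Cᵀ * Matrix.diagonal m' * C with hMdef
  have hm'0 : ∀ k, 0 ≤ m' k := by
    intro k; by_cases h : k ∈ T <;> simp [hm'def, h, hτ.le, hg k]
  have hm'g : ∀ k, m' k ≤ g k := by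
    intro k; by_cases h : k ∈ T <;> simp [hm'def, h, hT1 k]
  have hm'τ : ∀ k, m' k ≤ τ := by
    intro k; by_cases h : k ∈ T <;> simp [hm'def, h, hT2 k]
  have hMpsd : ∀ v, 0 ≤ v ⬝ᵥ M *ᵥ v := by
    intro v
    rw [hMdef, quadform_CDC]
    exact Finset.sum_nonneg fun k _ => mul_nonneg (hm'0 k) (sq_nonneg _)
  have hGMpsd : ∀ v, 0 ≤ v ⬝ᵥ (G - M) *ᵥ v := by
    intro v
    rw [hGdef, hMdef, sub_CDC, quadform_CDC]
    exact Finset.sum_nonneg fun k _ =>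
      mul_nonneg (by simpa using sub_nonneg.2 (hm'g k)) (sq_nonneg _)
  -- M is invertible
  have hMdet : IsUnit M.det := by
    by_contra hcon
    have h0 : M.det = 0 := by
      rcases eq_or_ne M.det 0 with h | h
      · exact h
      · exact absurd (isUnit_iff_ne_zero.2 h) hcon
    obtain ⟨v, hv0, hMv⟩ := (Matrix.exists_mulVec_eq_zero_iff).2 h0
    have hq : v ⬝ᵥ M *ᵥ v = 0 := by rw [hMv]; simp
    rw [hMdef, quadform_CDC] at hq
    have hterms : ∀ k ∈ Finset.univ, m' k * ((C *ᵥ v) k)^2 = 0 := by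
      intro k _
      have := (Finset.sum_eq_zero_iff_of_nonneg
        (fun k _ => mul_nonneg (hm'0 k) (sq_nonneg ((C *ᵥ v) k)))).1 hq
      exact this k (Finset.mem_univ k)
    have hgz : ∀ k, g k * (C *ᵥ v) k = 0 := by
      intro k
      have hk := hterms k (Finset.mem_univ k)
      by_cases h : k ∈ T
      · have : (C *ᵥ v) k = 0 := by
          simp only [hm'def, if_pos h] at hk
          rcases mul_eq_zero.1 hk with h' | h'
          · exact absurd h' (ne_of_gt hτ)
          · exact pow_eq_zero_iff (by norm_num) |>.1 h'
        rw [this, mul_zero]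
      · simp only [hm'def, if_neg h] at hk
        rcases mul_eq_zero.1 hk with h' | h'
        · rw [h', zero_mul]
        · rw [pow_eq_zero_iff (by norm_num) |>.1 h', mul_zero]
    have hGv : G *ᵥ v = 0 := by
      rw [hGdef, show Cᵀ * Matrix.diagonal g * C = Cᵀ * (Matrix.diagonal g * C) by
        rw [Matrix.mul_assoc], ← Matrix.mulVec_mulVec, ← Matrix.mulVec_mulVec]
      have : Matrix.diagonal g *ᵥ (C *ᵥ v) = 0 := by
        ext k; rw [Matrix.mulVec_diagonal]; exact hgz k
      rw [this, Matrix.mulVec_zero]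
    have : v = 0 := by
      have := congrArg (fun w => G⁻¹ *ᵥ w) hGv
      simpa [Matrix.mulVec_mulVec, Matrix.nonsing_inv_mul _ hGdet] using this
    exact hv0 this
  -- τ•1 - M psd and (τ•1) inverse
  have hconst : Cᵀ * Matrix.diagonal (fun _ : Fin m => τ) * C = τ • (1 : Matrix (Fin r) (Fin r) ℝ) := by
    have : Matrix.diagonal (fun _ : Fin m => τ) = τ • (1 : Matrix (Fin m) (Fin m) ℝ) := by
      rw [← Matrix.diagonal_one, ← Matrix.diagonal_smul]
      congr 1; ext k j; simp [Matrix.diagonal_apply, Matrix.one_apply, mul_ite]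
    rw [this]
    rw [Matrix.mul_smul, Matrix.mul_one, Matrix.smul_mul, hC]
  have hτ1det : IsUnit ((τ • (1 : Matrix (Fin r) (Fin r) ℝ)).det) := by
    rw [Matrix.det_smul, Matrix.det_one]
    simp only [mul_one]
    exact isUnit_iff_ne_zero.2 (pow_ne_zero _ (ne_of_gt hτ))
  have hτ1inv : (τ • (1 : Matrix (Fin r) (Fin r) ℝ))⁻¹ = τ⁻¹ • 1 := by
    apply Matrix.inv_eq_right_inv
    rw [Matrix.smul_mul, Matrix.mul_smul, Matrix.one_mul, smul_smul,
      mul_inv_cancel₀ (ne_of_gt hτ), one_smul]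
  have hτM : ∀ v, 0 ≤ v ⬝ᵥ (τ • (1 : Matrix (Fin r) (Fin r) ℝ) - M) *ᵥ v := by
    intro v
    rw [← hconst, hMdef, sub_CDC, quadform_CDC]
    exact Finset.sum_nonneg fun k _ =>
      mul_nonneg (by simpa using sub_nonneg.2 (hm'τ k)) (sq_nonneg _)
  -- pointwise quadratic comparisons
  set p : Fin m → ℝ := fun k => (C * G⁻¹ * Cᵀ) k k with hp
  set q : Fin m → ℝ := fun k => (C * M⁻¹ * Cᵀ) k k with hq
  set e : Fin m → ℝ := fun k => (C * (1 : Matrix (Fin r) (Fin r) ℝ) * Cᵀ) k k with he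
  have hpq : ∀ k, p k ≤ q k := by
    intro k
    simp only [hp, hq]
    rw [quad_helper, quad_helper]
    exact quad_inv_antitone G M (sym_CDC C m') hGdet hMdet hMpsd hGMpsd _
  have heq : ∀ k, τ⁻¹ * e k ≤ q k := by
    intro k
    simp only [hp, hq, he]
    rw [quad_helper, quad_helper]
    have := quad_inv_antitone (τ • (1 : Matrix (Fin r) (Fin r) ℝ)) M
      (sym_CDC C m') hτ1det hMdet hMpsd hτM (fun j => C k j)
    rw [hτ1inv] at this
    calc τ⁻¹ * ((fun j => C k j) ⬝ᵥ (1 : Matrix (Fin r) (Fin r) ℝ) *ᵥ (fun j => C k j))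
        = (fun j => C k j) ⬝ᵥ (τ⁻¹ • (1 : Matrix (Fin r) (Fin r) ℝ)) *ᵥ (fun j => C k j) := by
          rw [Matrix.smul_mulVec, dotProduct_smul]; simp
      _ ≤ _ := this
  have hp0 : ∀ k, 0 ≤ p k := by
    intro k
    simp only [hp]
    rw [quad_helper, quad_inv_eq G hGdet]
    have : ∀ v, 0 ≤ v ⬝ᵥ G *ᵥ v := by
      intro v; rw [hGdef, quadform_CDC]
      exact Finset.sum_nonneg fun k _ => mul_nonneg (hg k) (sq_nonneg _)
    exact this _
  have hq0 : ∀ k, 0 ≤ q k := by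
    intro k
    simp only [hq]
    rw [quad_helper, quad_inv_eq M hMdet]
    exact hMpsd _
  -- trace identities
  have hr : Matrix.trace (1 : Matrix (Fin r) (Fin r) ℝ) = (r : ℝ) := by
    simp [Matrix.trace_one]
  have F1 : ∑ k, g k * p k = (r : ℝ) := by
    rw [← trace_helper, ← hGdef, Matrix.nonsing_inv_mul _ hGdet, hr]
  have F3 : ∑ k, m' k * q k = (r : ℝ) := by
    rw [← trace_helper, ← hMdef, Matrix.nonsing_inv_mul _ hMdet, hr]
  show ∑ k ∈ T, e k ≤ ∑ k ∈ T, g k * p k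
  have split1 : ∑ k ∈ T, g k * p k + ∑ k ∈ Tᶜ, g k * p k = (r : ℝ) := by
    rw [Finset.sum_add_sum_compl]; exact F1
  have split3 : ∑ k ∈ T, m' k * q k + ∑ k ∈ Tᶜ, m' k * q k = (r : ℝ) := by
    rw [Finset.sum_add_sum_compl]; exact F3
  have e3a : ∑ k ∈ T, m' k * q k = τ * ∑ k ∈ T, q k := by
    rw [Finset.mul_sum]
    exact Finset.sum_congr rfl fun k hk => by rw [hm'def]; simp [hk]
  have e3b : ∑ k ∈ Tᶜ, m' k * q k = ∑ k ∈ Tᶜ, g k * q k := by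
    refine Finset.sum_congr rfl fun k hk => ?_
    have : k ∉ T := Finset.mem_compl.1 hk
    rw [hm'def]; simp [this]
  have i1 : ∑ k ∈ Tᶜ, g k * p k ≤ ∑ k ∈ Tᶜ, g k * q k :=
    Finset.sum_le_sum fun k _ => mul_le_mul_of_nonneg_left (hpq k) (hg k)
  have i2 : ∑ k ∈ T, e k ≤ τ * ∑ k ∈ T, q k := by
    have : ∑ k ∈ T, τ⁻¹ * e k ≤ ∑ k ∈ T, q k := Finset.sum_le_sum fun k _ => heq k
    have h2 : τ * ∑ k ∈ T, τ⁻¹ * e k = ∑ k ∈ T, e k := by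
      rw [Finset.mul_sum]
      refine Finset.sum_congr rfl fun k _ => ?_
      rw [← mul_assoc, mul_inv_cancel₀ (ne_of_gt hτ), one_mul]
    calc ∑ k ∈ T, e k = τ * ∑ k ∈ T, τ⁻¹ * e k := h2.symm
      _ ≤ τ * ∑ k ∈ T, q k := by
          exact mul_le_mul_of_nonneg_left this hτ.le
  linarith

lemma ind_aux (C : Matrix (Fin m) (Fin r) ℝ) (hC : Cᵀ * C = 1)
    (g : Fin m → ℝ) (hg : ∀ k, 0 ≤ g k)
    (hGdet : IsUnit (Cᵀ * Matrix.diagonal g * C).det) :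
    ∀ (s : ℕ) (d : Fin m → ℝ), (∀ k, 0 ≤ d k) → (∀ k l, d k < d l → g k < g l) →
    (Finset.univ.filter (fun k => 0 < d k)).card ≤ s →
    ∑ k, d k * ((C * (1 : Matrix (Fin r) (Fin r) ℝ) * Cᵀ) k k) ≤
      ∑ k, (g k * d k) * ((C * (Cᵀ * Matrix.diagonal g * C)⁻¹ * Cᵀ) k k) := by
  intro s
  induction s with
  | zero =>
    intro d hd0 _ hcard
    have hT : Finset.univ.filter (fun k => 0 < d k) = ∅ :=
      Finset.card_eq_zero.1 (Nat.le_zero.1 hcard)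
    have hdz : ∀ k, d k = 0 := by
      intro k
      by_contra h
      have : 0 < d k := lt_of_le_of_ne (hd0 k) (Ne.symm h)
      have : k ∈ Finset.univ.filter (fun k => 0 < d k) := by
        simp [Finset.mem_filter, this]
      rw [hT] at this
      exact absurd this (Finset.notMem_empty k)
    simp [hdz]
  | succ s ih =>
    intro d hd0 hord hcard
    set T := Finset.univ.filter (fun k => 0 < d k) with hT
    by_cases hTe : T = ∅
    · have hdz : ∀ k, d k = 0 := by
        intro k
        by_contra h
        have h1 : 0 < d k := lt_of_le_of_ne (hd0 k) (Ne.symm h)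
        have : k ∈ T := by simp [hT, Finset.mem_filter, h1]
        rw [hTe] at this
        exact absurd this (Finset.notMem_empty k)
      simp [hdz]
    · have hTne : T.Nonempty := Finset.nonempty_of_ne_empty hTe
      obtain ⟨k₀, hk₀T, hk₀min⟩ := Finset.exists_min_image T d hTne
      set δ := d k₀ with hδdef
      have hδpos : 0 < δ := by
        have := (Finset.mem_filter.1 hk₀T).2
        exact this
      have hdT : ∀ k, k ∉ T → d k = 0 := by
        intro k hk
        by_contra h
        exact hk (Finset.mem_filter.2 ⟨Finset.mem_univ k,
          lt_of_le_of_ne (hd0 k) (Ne.symm h)⟩)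
      have hdTge : ∀ k ∈ T, δ ≤ d k := hk₀min
      set d'' : Fin m → ℝ := fun k => d k - δ * (if k ∈ T then 1 else 0) with hd''
      have hd''0 : ∀ k, 0 ≤ d'' k := by
        intro k
        by_cases h : k ∈ T
        · simp only [hd'', if_pos h, mul_one]
          linarith [hdTge k h]
        · simp only [hd'', if_neg h, mul_zero, sub_zero]
          exact hd0 k
      have hd''ord : ∀ k l, d'' k < d'' l → g k < g l := by
        intro k l hkl
        by_cases hk : k ∈ T <;> by_cases hl : l ∈ T
        · apply hord
          simp only [hd'', if_pos hk, if_pos hl] at hkl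
          linarith
        · exfalso
          have h1 : d'' l = 0 := by simp [hd'', if_neg hl, hdT l hl]
          have := hd''0 k
          rw [h1] at hkl
          linarith
        · apply hord
          have : d k = 0 := hdT k hk
          have := hdTge l hl
          linarith [hdT k hk, hdTge l hl, hδpos]
        · exfalso
          have h1 : d'' l = 0 := by simp [hd'', if_neg hl, hdT l hl]
          have := hd''0 k
          rw [h1] at hkl
          linarith
      have hsub : Finset.univ.filter (fun k => 0 < d'' k) ⊆ T.erase k₀ := by
        intro k hk
        have hk' : 0 < d'' k := (Finset.mem_filter.1 hk).2
        have hkT : k ∈ T := by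
          by_contra h
          have : d'' k = 0 := by simp [hd'', if_neg h, hdT k h]
          rw [this] at hk'
          exact lt_irrefl 0 hk'
        refine Finset.mem_erase.2 ⟨?_, hkT⟩
        intro h
        rw [h] at hk'
        have : d'' k₀ = 0 := by simp [hd'', if_pos hk₀T, hδdef]
        rw [this] at hk'
        exact lt_irrefl 0 hk'
      have hcard'' : (Finset.univ.filter (fun k => 0 < d'' k)).card ≤ s := by
        have h1 := Finset.card_le_card hsub
        have h2 : (T.erase k₀).card = T.card - 1 := Finset.card_erase_of_mem hk₀T
        have h3 : T.card ≤ s + 1 := hcard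
        omega
      have IH := ih d'' hd''0 hd''ord hcard''
      -- threshold part
      have hτex : ∑ k ∈ T, (C * (1 : Matrix (Fin r) (Fin r) ℝ) * Cᵀ) k k ≤
          ∑ k ∈ T, g k * ((C * (Cᵀ * Matrix.diagonal g * C)⁻¹ * Cᵀ) k k) := by
        by_cases hTu : T = Finset.univ
        · -- equality case: use F1-type identity
          obtain ⟨kg, hkgT, hkgmin⟩ := Finset.exists_min_image T g hTne
          by_cases hTc : Tᶜ = (∅ : Finset (Fin m))
          · -- T = univ : Σ_univ e = r = Σ_univ g p
            have e1 : ∑ k ∈ T, (C * (1 : Matrix (Fin r) (Fin r) ℝ) * Cᵀ) k k = (r : ℝ) := by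
              rw [hTu]
              have := trace_helper C (1 : Matrix (Fin r) (Fin r) ℝ) (fun _ => 1)
              simp only [one_mul] at this
              have h2 : Cᵀ * Matrix.diagonal (fun _ : Fin m => (1:ℝ)) * C = 1 := by
                rw [Matrix.diagonal_one, Matrix.mul_one, hC]
              rw [h2] at this
              simpa [Matrix.trace_one] using this.symm
            have e2 : ∑ k ∈ T, g k * ((C * (Cᵀ * Matrix.diagonal g * C)⁻¹ * Cᵀ) k k) = (r : ℝ) := by
              rw [hTu, ← trace_helper, Matrix.nonsing_inv_mul _ hGdet]
              simp [Matrix.trace_one]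
            rw [e1, e2]
          · exact absurd (by rw [hTu]; simp) hTc
        · -- T ≠ univ: apply threshold with τ = min g over T
          obtain ⟨kg, hkgT, hkgmin⟩ := Finset.exists_min_image T g hTne
          obtain ⟨l₀, hl₀⟩ : ∃ l, l ∉ T := by
            by_contra h
            push_neg at h
            exact hTu (Finset.eq_univ_iff_forall.2 h)
          have hglt : ∀ l ∉ T, ∀ k ∈ T, g l < g k := by
            intro l hl k hk
            apply hord
            rw [hdT l hl]
            exact (Finset.mem_filter.1 hk).2
          have hτpos : 0 < g kg := lt_of_le_of_lt (hg l₀) (hglt l₀ hl₀ kg hkgT)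
          exact threshold C hC g hg hGdet T (g kg) hτpos hkgmin
            (fun l hl => le_of_lt (hglt l hl kg hkgT))
      -- combine
      have hdecomp : ∀ (φ : Fin m → ℝ),
          ∑ k, d k * φ k = ∑ k, d'' k * φ k + δ * ∑ k ∈ T, φ k := by
        intro φ
        have h1 : ∀ k, d k * φ k = d'' k * φ k + δ * ((if k ∈ T then 1 else 0) * φ k) := by
          intro k
          simp only [hd'']
          ring
        rw [Finset.sum_congr rfl (fun k _ => h1 k), Finset.sum_add_distrib, ← Finset.mul_sum]
        congr 1
        simp only [ite_mul, one_mul, zero_mul]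
        rw [← Finset.sum_filter, Finset.filter_mem_eq_inter, Finset.univ_inter]
      have hdecomp2 : ∀ (φ : Fin m → ℝ),
          ∑ k, (g k * d k) * φ k = ∑ k, (g k * d'' k) * φ k + δ * ∑ k ∈ T, g k * φ k := by
        intro φ
        have h1 : ∀ k, (g k * d k) * φ k
            = (g k * d'' k) * φ k + δ * ((if k ∈ T then 1 else 0) * (g k * φ k)) := by
          intro k
          simp only [hd'']
          ring
        rw [Finset.sum_congr rfl (fun k _ => h1 k), Finset.sum_add_distrib, ← Finset.mul_sum]
        congr 1
        simp only [ite_mul, one_mul, zero_mul]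
        rw [← Finset.sum_filter, Finset.filter_mem_eq_inter, Finset.univ_inter]
      rw [hdecomp, hdecomp2]
      have := mul_le_mul_of_nonneg_left hτex hδpos.le
      linarith

lemma sum_e_eq (C : Matrix (Fin m) (Fin r) ℝ) (hC : Cᵀ * C = 1) :
    ∑ k, (C * (1 : Matrix (Fin r) (Fin r) ℝ) * Cᵀ) k k = (r : ℝ) := by
  have := trace_helper C (1 : Matrix (Fin r) (Fin r) ℝ) (fun _ => 1)
  have h2 : Cᵀ * Matrix.diagonal (fun _ : Fin m => (1:ℝ)) * C = 1 := by
    rw [Matrix.diagonal_one, Matrix.mul_one, hC]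
  rw [h2, Matrix.mul_one] at this
  simpa [Matrix.trace_one] using this.symm

lemma sum_gp_eq (C : Matrix (Fin m) (Fin r) ℝ) (g : Fin m → ℝ)
    (hGdet : IsUnit (Cᵀ * Matrix.diagonal g * C).det) :
    ∑ k, g k * ((C * (Cᵀ * Matrix.diagonal g * C)⁻¹ * Cᵀ) k k) = (r : ℝ) := by
  rw [← trace_helper, Matrix.nonsing_inv_mul _ hGdet]
  simp [Matrix.trace_one]

lemma core_trace (C : Matrix (Fin m) (Fin r) ℝ) (hC : Cᵀ * C = 1)
    (g d : Fin m → ℝ) (hg : ∀ k, 0 ≤ g k) (hord : ∀ k l, d k < d l → g k < g l)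
    (hGdet : IsUnit (Cᵀ * Matrix.diagonal g * C).det) :
    Matrix.trace (Cᵀ * Matrix.diagonal d * C) ≤
      Matrix.trace ((Cᵀ * Matrix.diagonal g * C)⁻¹ *
        (Cᵀ * Matrix.diagonal (fun k => g k * d k) * C)) := by
  have hL : Matrix.trace (Cᵀ * Matrix.diagonal d * C)
      = ∑ k, d k * ((C * (1 : Matrix (Fin r) (Fin r) ℝ) * Cᵀ) k k) := by
    rw [show Cᵀ * Matrix.diagonal d * C
      = (1 : Matrix (Fin r) (Fin r) ℝ) * (Cᵀ * Matrix.diagonal d * C) by rw [Matrix.one_mul]]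
    rw [trace_helper]
  have hR : Matrix.trace ((Cᵀ * Matrix.diagonal g * C)⁻¹ *
      (Cᵀ * Matrix.diagonal (fun k => g k * d k) * C))
      = ∑ k, (g k * d k) * ((C * (Cᵀ * Matrix.diagonal g * C)⁻¹ * Cᵀ) k k) := by
    rw [trace_helper]
  rw [hL, hR]
  rcases isEmpty_or_nonempty (Fin m) with hm | hm
  · simp
  obtain ⟨k₀, _, hk₀min⟩ := Finset.exists_min_image Finset.univ d ⟨Classical.arbitrary _,
    Finset.mem_univ _⟩
  set c := d k₀ with hc
  set d' : Fin m → ℝ := fun k => d k - c with hd'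
  have hd'0 : ∀ k, 0 ≤ d' k := by
    intro k
    simp only [hd', sub_nonneg]
    exact hk₀min k (Finset.mem_univ k)
  have hd'ord : ∀ k l, d' k < d' l → g k < g l := by
    intro k l h
    apply hord
    simp only [hd'] at h
    linarith
  have key := ind_aux C hC g hg hGdet
    ((Finset.univ.filter (fun k => 0 < d' k)).card) d' hd'0 hd'ord le_rfl
  have he := sum_e_eq C hC
  have hgp := sum_gp_eq C g hGdet
  have hLs : ∑ k, d k * ((C * (1 : Matrix (Fin r) (Fin r) ℝ) * Cᵀ) k k)
      = ∑ k, d' k * ((C * (1 : Matrix (Fin r) (Fin r) ℝ) * Cᵀ) k k) + c * (r : ℝ) := by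
    rw [← he, Finset.mul_sum, ← Finset.sum_add_distrib]
    refine Finset.sum_congr rfl fun k _ => ?_
    simp only [hd']
    ring
  have hRs : ∑ k, (g k * d k) * ((C * (Cᵀ * Matrix.diagonal g * C)⁻¹ * Cᵀ) k k)
      = ∑ k, (g k * d' k) * ((C * (Cᵀ * Matrix.diagonal g * C)⁻¹ * Cᵀ) k k) + c * (r : ℝ) := by
    rw [← hgp]
    rw [show c * ∑ k, g k * ((C * (Cᵀ * Matrix.diagonal g * C)⁻¹ * Cᵀ) k k)
      = ∑ k, c * (g k * ((C * (Cᵀ * Matrix.diagonal g * C)⁻¹ * Cᵀ) k k)) from Finset.mul_sum _ _ _]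
    rw [← Finset.sum_add_distrib]
    refine Finset.sum_congr rfl fun k _ => ?_
    simp only [hd']
    ring
  rw [hLs, hRs]
  linarith

section Assembly
variable {n r : ℕ}

lemma trace_EXE (hr : r ≤ n + 2) (E : Matrix (Fin (n+2)) (Fin r) ℝ)
    (hE : E = fun i j => if i = Fin.castLE hr j then 1 else 0)
    (X : Matrix (Fin (n+2)) (Fin (n+2)) ℝ) :
    Matrix.trace (Eᵀ * X * E) = ∑ i ∈ Finset.univ.filter (fun i : Fin (n+2) => i.val < r), X i i := by
  have hentry : ∀ j j' : Fin r, (Eᵀ * X * E) j j' = X (Fin.castLE hr j) (Fin.castLE hr j') := by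
    intro j j'
    simp only [Matrix.mul_apply, Matrix.transpose_apply, show ∀ i j, E i j = (if i = Fin.castLE hr j then 1 else 0 : ℝ) from fun i j => by rw [hE]]
    simp only [ite_mul, one_mul, zero_mul, mul_ite, mul_one, mul_zero,
      Finset.sum_ite_eq', Finset.mem_univ, if_true]
  rw [Matrix.trace]
  have h1 : ∑ j : Fin r, (Eᵀ * X * E).diag j = ∑ j : Fin r, X (Fin.castLE hr j) (Fin.castLE hr j) :=
    Finset.sum_congr rfl fun j _ => hentry j j
  rw [h1]
  symm
  refine Finset.sum_bij'
    (fun (i : Fin (n+2)) (hi : i ∈ Finset.univ.filter (fun i : Fin (n+2) => i.val < r)) =>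
      (⟨i.val, (Finset.mem_filter.1 hi).2⟩ : Fin r))
    (fun (j : Fin r) _ => Fin.castLE hr j) ?_ ?_ ?_ ?_ ?_
  · intro i hi; exact Finset.mem_univ _
  · intro j _
    simp only [Finset.mem_filter]
    exact ⟨Finset.mem_univ _, j.isLt⟩
  · intro i hi; ext; rfl
  · intro j _; ext; rfl
  · intro i hi; rfl

lemma assembly (hr1 : 1 ≤ r) (hr2 : r ≤ n + 1)
    (S U A Q R : Matrix (Fin (n+2)) (Fin (n+2)) ℝ) (d : Fin (n+2) → ℝ) (f : ℝ → ℝ)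
    (hU : Uᵀ * U = 1) (hS : S = U * Matrix.diagonal d * Uᵀ)
    (hA : A = U * Matrix.diagonal (fun i => f (d i)) * Uᵀ)
    (hQ : Qᵀ * Q = 1) (hRtri : ∀ i j : Fin (n+2), j < i → R i j = 0)
    (hRpos : ∀ i : Fin (n+1), 0 < R i.castSucc i.castSucc) (hAQR : A = Q * R)
    (hr : r ≤ n + 2)
    (E : Matrix (Fin (n+2)) (Fin r) ℝ)
    (hE : E = fun i j => if i = Fin.castLE hr j then 1 else 0) :
    ((Uᵀ * E)ᵀ * (Uᵀ * E) = 1) ∧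
    IsUnit (((Uᵀ * E)ᵀ * Matrix.diagonal (fun k => f (d k) * f (d k)) * (Uᵀ * E)).det) ∧
    Matrix.trace ((Uᵀ * E)ᵀ * Matrix.diagonal d * (Uᵀ * E)) = Matrix.trace (Eᵀ * S * E) ∧
    Matrix.trace ((((Uᵀ * E)ᵀ * Matrix.diagonal (fun k => f (d k) * f (d k)) * (Uᵀ * E))⁻¹) *
        ((Uᵀ * E)ᵀ * Matrix.diagonal (fun k => (f (d k) * f (d k)) * d k) * (Uᵀ * E)))
      = Matrix.trace (Eᵀ * (Qᵀ * S * Q) * E) := by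
  set a : Fin (n+2) → ℝ := fun k => f (d k) with ha
  set g : Fin (n+2) → ℝ := fun k => f (d k) * f (d k) with hg
  set C : Matrix (Fin (n+2)) (Fin r) ℝ := Uᵀ * E with hCdef
  have hUU' : U * Uᵀ = 1 := mul_eq_one_comm.mp hU
  have hEE : Eᵀ * E = 1 := by
    ext j j'
    simp only [Matrix.mul_apply, Matrix.transpose_apply, show ∀ i j, E i j = (if i = Fin.castLE hr j then 1 else 0 : ℝ) from fun i j => by rw [hE], ite_mul, one_mul, zero_mul,
      Finset.sum_ite_eq', Finset.mem_univ, if_true]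
    rw [Matrix.one_apply]
    by_cases h : j = j'
    · simp [h]
    · rw [if_neg h]
      rw [if_neg (fun hc => h (Fin.castLE_injective hr hc))]
  have hCC : Cᵀ * C = 1 := by
    rw [hCdef, Matrix.transpose_mul, Matrix.transpose_transpose]
    rw [Matrix.mul_assoc, ← Matrix.mul_assoc U Uᵀ E, hUU', Matrix.one_mul, hEE]
  -- Rr
  set Rr : Matrix (Fin r) (Fin r) ℝ := fun j j' => R (Fin.castLE hr j) (Fin.castLE hr j') with hRr
  have hRrtri : ∀ j j' : Fin r, j' < j → Rr j j' = 0 := by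
    intro j j' h
    have hlt : (Fin.castLE hr j' : Fin (n+2)) < Fin.castLE hr j := by
      simp only [Fin.lt_def, Fin.coe_castLE]
      exact h
    exact hRtri _ _ hlt
  have hRrpos : ∀ j : Fin r, 0 < Rr j j := by
    intro j
    have hj : (j : ℕ) < n + 1 := lt_of_lt_of_le j.isLt hr2
    have h2 : Fin.castSucc (⟨j, hj⟩ : Fin (n+1)) = Fin.castLE hr j := by ext; rfl
    show 0 < R (Fin.castLE hr j) (Fin.castLE hr j)
    rw [← h2]
    exact hRpos _
  have hRrdet : Rr.det = ∏ j, Rr j j := by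
    apply Matrix.det_of_upperTriangular
    intro j j' h
    exact hRrtri j j' h
  have hRrdetpos : 0 < Rr.det := by
    rw [hRrdet]; exact Finset.prod_pos fun j _ => hRrpos j
  have hRrunit : IsUnit Rr.det := isUnit_iff_ne_zero.2 (ne_of_gt hRrdetpos)
  -- R * E = E * Rr
  have hRE : R * E = E * Rr := by
    ext i j
    simp only [Matrix.mul_apply, show ∀ i j, E i j = (if i = Fin.castLE hr j then 1 else 0 : ℝ) from fun i j => by rw [hE], mul_ite, mul_one, mul_zero, ite_mul, one_mul, zero_mul,
      Finset.sum_ite_eq', Finset.mem_univ, if_true]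
    by_cases h : (i : ℕ) < r
    · have : ∑ j' : Fin r, (if i = Fin.castLE hr j' then Rr j' j else 0)
          = Rr ⟨i, h⟩ j := by
        rw [Finset.sum_eq_single (⟨i, h⟩ : Fin r)]
        · simp
        · intro b _ hb
          have : i ≠ Fin.castLE hr b := by
            intro hcon
            exact hb (by ext; exact (congrArg Fin.val hcon).symm)
          simp [this]
        · intro hcon; exact absurd (Finset.mem_univ _) hcon
      rw [this]
      rfl
    · have h1 : R i (Fin.castLE hr j) = 0 := by
        apply hRtri
        simp only [Fin.lt_def]
        exact lt_of_lt_of_le j.isLt (le_of_not_gt h)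
      rw [h1]
      symm
      apply Finset.sum_eq_zero
      intro b _
      have : i ≠ Fin.castLE hr b := by
        intro hcon
        apply h
        rw [hcon]
        exact b.isLt
      simp [this]
  set X : Matrix (Fin (n+2)) (Fin r) ℝ := A * E with hX
  have hXU : X = U * Matrix.diagonal a * C := by
    rw [hX, hA, hCdef]
    simp only [Matrix.mul_assoc]
  have hXQ : X = (Q * E) * Rr := by
    rw [hX, hAQR, Matrix.mul_assoc, hRE, Matrix.mul_assoc]
  have hQEE : (Q * E)ᵀ * (Q * E) = 1 := by
    rw [Matrix.transpose_mul]
    rw [Matrix.mul_assoc, ← Matrix.mul_assoc Qᵀ Q E, hQ, Matrix.one_mul, hEE]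
  have hGRr : Cᵀ * Matrix.diagonal g * C = Rrᵀ * Rr := by
    have h1 : Xᵀ * X = Cᵀ * Matrix.diagonal g * C := by
      rw [hXU]
      simp only [Matrix.transpose_mul, Matrix.diagonal_transpose, Matrix.transpose_transpose]
      simp only [Matrix.mul_assoc]
      rw [← Matrix.mul_assoc Uᵀ U (Matrix.diagonal a * C), hU, Matrix.one_mul,
        ← Matrix.mul_assoc (Matrix.diagonal a) (Matrix.diagonal a) C,
        Matrix.diagonal_mul_diagonal]
    have h2 : Xᵀ * X = Rrᵀ * Rr := by
      rw [hXQ, Matrix.transpose_mul]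
      rw [Matrix.mul_assoc, ← Matrix.mul_assoc (Q * E)ᵀ (Q * E) Rr, hQEE, Matrix.one_mul]
    rw [← h1, h2]
  have hGdet : IsUnit ((Cᵀ * Matrix.diagonal g * C).det) := by
    rw [hGRr, Matrix.det_mul, Matrix.det_transpose]
    exact (hRrunit.mul hRrunit)
  refine ⟨hCC, hGdet, ?_, ?_⟩
  · -- trace for S
    congr 1
    rw [hS, hCdef, Matrix.transpose_mul, Matrix.transpose_transpose]
    simp only [Matrix.mul_assoc]
  · -- trace for F
    have hW : Q * E = X * Rr⁻¹ := by
      rw [hXQ, Matrix.mul_assoc, Matrix.mul_nonsing_inv _ hRrunit, Matrix.mul_one]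
    have hXSX : Xᵀ * S * X = Cᵀ * Matrix.diagonal (fun k => g k * d k) * C := by
      rw [hXU, hS]
      simp only [Matrix.transpose_mul, Matrix.diagonal_transpose, Matrix.transpose_transpose]
      simp only [Matrix.mul_assoc]
      rw [← Matrix.mul_assoc Uᵀ U
        (Matrix.diagonal d * (Uᵀ * (U * (Matrix.diagonal a * C)))), hU, Matrix.one_mul]
      rw [← Matrix.mul_assoc Uᵀ U (Matrix.diagonal a * C), hU, Matrix.one_mul]
      rw [← Matrix.mul_assoc (Matrix.diagonal d) (Matrix.diagonal a) C,
        Matrix.diagonal_mul_diagonal]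
      rw [← Matrix.mul_assoc (Matrix.diagonal a) (Matrix.diagonal fun i => d i * a i) C,
        Matrix.diagonal_mul_diagonal]
      have : (fun i => a i * (d i * a i)) = (fun k => g k * d k) := by
        funext k
        simp only [hg, ha]
        ring
      rw [this]
    have hEFE : Eᵀ * (Qᵀ * S * Q) * E = Rr⁻¹ᵀ * (Xᵀ * S * X) * Rr⁻¹ := by
      have h1 : Eᵀ * (Qᵀ * S * Q) * E = (Q * E)ᵀ * S * (Q * E) := by
        rw [Matrix.transpose_mul]
        simp only [Matrix.mul_assoc]
      rw [h1, hW, Matrix.transpose_mul]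
      simp only [Matrix.mul_assoc]
    rw [hEFE, hXSX]
    have hGinv : (Cᵀ * Matrix.diagonal g * C)⁻¹ = Rr⁻¹ * Rr⁻¹ᵀ := by
      rw [hGRr, Matrix.mul_inv_rev, Matrix.transpose_nonsing_inv]
    rw [hGinv]
    conv_rhs => rw [Matrix.trace_mul_cycle]

end Assembly


theorem stmt19 (n : ℕ) (S : Matrix (Fin (n+2)) (Fin (n+2)) ℝ)
    (U : Matrix (Fin (n+2)) (Fin (n+2)) ℝ) (d : Fin (n+2) → ℝ)
    (hU : Uᵀ * U = 1) (hd : Function.Injective d)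
    (hS : S = U * Matrix.diagonal d * Uᵀ)
    (f : ℝ → ℝ) (hf : ∀ i j : Fin (n+2), d i < d j → |f (d i)| < |f (d j)|)
    (A : Matrix (Fin (n+2)) (Fin (n+2)) ℝ)
    (hA : A = U * Matrix.diagonal (fun i => f (d i)) * Uᵀ)
    (hAi : AlmostInv A)
    (Q R : Matrix (Fin (n+2)) (Fin (n+2)) ℝ) (hQR : IsQsRs A Q R) :
    (∀ r : ℕ, 1 ≤ r → r ≤ n + 1 →
      ∑ i ∈ Finset.univ.filter (fun i : Fin (n+2) => i.val < r), S i i ≤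
        ∑ i ∈ Finset.univ.filter (fun i : Fin (n+2) => i.val < r), (Qᵀ * S * Q) i i) ∧
    ((Qᵀ * S * Q) 0 0 = S 0 0 → ∀ j : Fin (n+2), j ≠ 0 → S 0 j = 0) := by
  obtain ⟨hQ, hQdet, hRtri, hRpos, hAQR⟩ := hQR
  have hordg : ∀ k l : Fin (n+2), d k < d l → f (d k) * f (d k) < f (d l) * f (d l) := by
    intro k l h
    have h2 := hf k l h
    have h3 := mul_self_lt_mul_self (abs_nonneg (f (d k))) h2
    rwa [abs_mul_abs_self, abs_mul_abs_self] at h3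
  constructor
  · intro r hr1 hr2
    have hr : r ≤ n + 2 := by omega
    set E : Matrix (Fin (n+2)) (Fin r) ℝ :=
      fun i j => if i = Fin.castLE hr j then 1 else 0 with hEdef
    obtain ⟨hCC, hGdet, hTS, hTF⟩ := assembly hr1 hr2 S U A Q R d f hU hS hA hQ hRtri
      hRpos hAQR hr E hEdef
    have hcore := core_trace (Uᵀ * E)
      hCC (fun k => f (d k) * f (d k)) d (fun k => mul_self_nonneg _) hordg hGdet
    rw [← trace_EXE hr E hEdef S, ← trace_EXE hr E hEdef (Qᵀ * S * Q)]
    rw [← hTS, ← hTF]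
    exact hcore
  · intro hF00 j hj
    have hr1 : 1 ≤ 1 := le_refl 1
    have hr2 : 1 ≤ n + 1 := by omega
    have hr : 1 ≤ n + 2 := by omega
    set E : Matrix (Fin (n+2)) (Fin 1) ℝ :=
      fun i j' => if i = Fin.castLE hr j' then 1 else 0 with hEdef
    obtain ⟨hCC, hGdet, hTS, hTF⟩ := assembly hr1 hr2 S U A Q R d f hU hS hA hQ hRtri
      hRpos hAQR hr E hEdef
    set g : Fin (n+2) → ℝ := fun k => f (d k) * f (d k) with hgdef
    set C : Matrix (Fin (n+2)) (Fin 1) ℝ := Uᵀ * E with hCdef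
    set cc : Fin (n+2) → ℝ := fun k => U 0 k with hccdef
    have h0cast : Fin.castLE hr (0 : Fin 1) = (0 : Fin (n+2)) := rfl
    have hCk0 : ∀ k, C k 0 = cc k := by
      intro k
      simp only [hCdef, show ∀ i j', E i j' = (if i = Fin.castLE hr j' then 1 else 0 : ℝ) from fun i j' => by rw [hEdef], Matrix.mul_apply, Matrix.transpose_apply, mul_ite, mul_one,
        mul_zero, Finset.sum_ite_eq', Finset.mem_univ, if_true, h0cast, hccdef]
    -- entries of 1x1 matrices
    have hentry : ∀ w : Fin (n+2) → ℝ,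
        (Cᵀ * Matrix.diagonal w * C) 0 0 = ∑ k, w k * (cc k)^2 := by
      intro w
      rw [Matrix.mul_apply]
      have h1 : ∀ k, (Cᵀ * Matrix.diagonal w) 0 k = C k 0 * w k := by
        intro k
        rw [Matrix.mul_diagonal, Matrix.transpose_apply]
      refine Finset.sum_congr rfl fun k _ => ?_
      rw [h1, hCk0]
      ring
    -- Σ cc² = 1
    have hsum1 : ∑ k, (cc k)^2 = 1 := by
      have h1 : (Cᵀ * Matrix.diagonal (fun _ : Fin (n+2) => (1:ℝ)) * C) 0 0
          = (1 : Matrix (Fin 1) (Fin 1) ℝ) 0 0 := by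
        rw [Matrix.diagonal_one, Matrix.mul_one, hCC]
      rw [hentry] at h1
      simpa using h1
    -- 1x1 trace facts
    have htr1 : ∀ M : Matrix (Fin 1) (Fin 1) ℝ, Matrix.trace M = M 0 0 := fun M =>
      Matrix.trace_fin_one M
    -- S 0 0 and F 0 0 identification
    have hfil : Finset.univ.filter (fun i : Fin (n+2) => i.val < 1) = {(0 : Fin (n+2))} := by
      ext i
      simp only [Finset.mem_filter, Finset.mem_univ, true_and, Finset.mem_singleton]
      constructor
      · intro h; ext; simp only [Fin.val_zero]; omega
      · intro h; subst h; simp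
    have hSid : Matrix.trace (Cᵀ * Matrix.diagonal d * C) = S 0 0 := by
      rw [hCdef] at *
      rw [hTS, trace_EXE hr E hEdef S, hfil, Finset.sum_singleton]
    have hFid : Matrix.trace ((Cᵀ * Matrix.diagonal g * C)⁻¹ *
        (Cᵀ * Matrix.diagonal (fun k => g k * d k) * C)) = (Qᵀ * S * Q) 0 0 := by
      rw [hCdef] at *
      rw [hTF, trace_EXE hr E hEdef (Qᵀ * S * Q), hfil, Finset.sum_singleton]
    set G : Matrix (Fin 1) (Fin 1) ℝ := Cᵀ * Matrix.diagonal g * C with hGdef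
    set H : Matrix (Fin 1) (Fin 1) ℝ := Cᵀ * Matrix.diagonal (fun k => g k * d k) * C with hHdef
    have hG00 : G 0 0 = ∑ k, g k * (cc k)^2 := hentry g
    have hH00 : H 0 0 = ∑ k, (g k * d k) * (cc k)^2 := hentry _
    have hK00 : S 0 0 = ∑ k, d k * (cc k)^2 := by
      rw [← hSid, htr1, hentry]
    have hGne : G 0 0 ≠ 0 := by
      intro hcon
      rw [← Matrix.det_fin_one G] at hcon
      exact (isUnit_iff_ne_zero.1 hGdet) hcon
    have hGinv00 : G⁻¹ 0 0 = (G 0 0)⁻¹ := by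
      rw [Matrix.inv_def, Matrix.adjugate_fin_one, Matrix.det_fin_one]
      simp [Ring.inverse_eq_inv']
    have hFval : (Qᵀ * S * Q) 0 0 = (G 0 0)⁻¹ * H 0 0 := by
      rw [← hFid, htr1, Matrix.mul_apply, Fin.sum_univ_one, hGinv00]
    -- main equality : H00 = S00 * G00
    have hHeq : H 0 0 = S 0 0 * G 0 0 := by
      have h1 : (G 0 0)⁻¹ * H 0 0 = S 0 0 := by rw [← hFval, hF00]
      have h2 : G 0 0 * ((G 0 0)⁻¹ * H 0 0) = G 0 0 * S 0 0 := by rw [h1]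
      rw [← mul_assoc, mul_inv_cancel₀ hGne, one_mul] at h2
      rw [h2]
      ring
    -- the double sum identity
    have hdouble : ∑ k, ∑ l, ((cc k)^2 * (cc l)^2 * ((g k - g l) * (d k - d l))) = 0 := by
      have hexp : ∀ k l : Fin (n+2), (cc k)^2 * (cc l)^2 * ((g k - g l) * (d k - d l))
          = ((g k * d k) * (cc k)^2) * (cc l)^2 + (cc k)^2 * ((g l * d l) * (cc l)^2)
            - (g k * (cc k)^2) * (d l * (cc l)^2) - (d k * (cc k)^2) * (g l * (cc l)^2) := by
        intro k l; ring
      have hinner : ∀ k : Fin (n+2), ∑ l, ((cc k)^2 * (cc l)^2 * ((g k - g l) * (d k - d l)))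
          = ((g k * d k) * (cc k)^2) * 1 + (cc k)^2 * (H 0 0)
            - (g k * (cc k)^2) * (S 0 0) - (d k * (cc k)^2) * (G 0 0) := by
        intro k
        rw [Finset.sum_congr rfl fun l _ => hexp k l]
        rw [Finset.sum_sub_distrib, Finset.sum_sub_distrib, Finset.sum_add_distrib,
          ← Finset.mul_sum, ← Finset.mul_sum, ← Finset.mul_sum, ← Finset.mul_sum]
        rw [hsum1, ← hH00, ← hK00, ← hG00]
      rw [Finset.sum_congr rfl fun k _ => hinner k]
      rw [Finset.sum_sub_distrib, Finset.sum_sub_distrib, Finset.sum_add_distrib]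
      rw [← Finset.sum_mul, ← Finset.sum_mul, ← Finset.sum_mul, ← Finset.sum_mul]
      rw [← hH00, ← hK00, ← hG00]
      have : ∑ k, (cc k)^2 = 1 := hsum1
      rw [this]
      rw [hHeq]
      ring
    -- each term nonneg
    have hterm_nonneg : ∀ k l : Fin (n+2),
        0 ≤ (cc k)^2 * (cc l)^2 * ((g k - g l) * (d k - d l)) := by
      intro k l
      apply mul_nonneg (mul_nonneg (sq_nonneg _) (sq_nonneg _))
      rcases lt_trichotomy (d k) (d l) with h | h | h
      · have h2 : g k < g l := by simpa [hgdef] using hordg k l h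
        exact le_of_lt (mul_pos_of_neg_of_neg (by linarith) (by linarith))
      · rw [h]; simp
      · have h2 : g l < g k := by simpa [hgdef] using hordg l k h
        exact le_of_lt (mul_pos (by linarith) (by linarith))
    -- all terms zero
    have hterm_zero : ∀ k l : Fin (n+2),
        (cc k)^2 * (cc l)^2 * ((g k - g l) * (d k - d l)) = 0 := by
      have houter := (Finset.sum_eq_zero_iff_of_nonneg
        (fun k (_ : k ∈ Finset.univ) =>
          Finset.sum_nonneg fun l _ => hterm_nonneg k l)).1 hdouble
      intro k l
      have hk := houter k (Finset.mem_univ k)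
      exact (Finset.sum_eq_zero_iff_of_nonneg
        (fun l (_ : l ∈ Finset.univ) => hterm_nonneg k l)).1 hk l (Finset.mem_univ l)
    -- cc has (at most) one nonzero entry
    have hcczero : ∀ k l : Fin (n+2), k ≠ l → cc k * cc l = 0 := by
      intro k l hkl
      have hdl : d k ≠ d l := fun hcon => hkl (hd hcon)
      have hpos : 0 < (g k - g l) * (d k - d l) := by
        rcases lt_or_gt_of_ne hdl with h | h
        · have h2 : g k < g l := by simpa [hgdef] using hordg k l h
          exact mul_pos_of_neg_of_neg (by linarith) (by linarith)
        · have h2 : g l < g k := by simpa [hgdef] using hordg l k h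
          exact mul_pos (by linarith) (by linarith)
      have hz := hterm_zero k l
      rcases mul_eq_zero.1 hz with h3 | h3
      · rcases mul_eq_zero.1 h3 with h4 | h4
        · rw [pow_eq_zero_iff (two_ne_zero) |>.1 h4, zero_mul]
        · rw [pow_eq_zero_iff (two_ne_zero) |>.1 h4, mul_zero]
      · exact absurd h3 (ne_of_gt hpos)
    obtain ⟨k₀, hk₀⟩ : ∃ k₀, cc k₀ ≠ 0 := by
      by_contra hcon
      push_neg at hcon
      have : ∑ k, (cc k)^2 = 0 := Finset.sum_eq_zero fun k _ => by rw [hcon k]; ring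
      rw [hsum1] at this
      norm_num at this
    -- compute S 0 j
    have hSentry : S 0 j = ∑ k, cc k * d k * U j k := by
      rw [hS]
      rw [Matrix.mul_apply]
      refine Finset.sum_congr rfl fun k _ => ?_
      rw [Matrix.mul_diagonal, Matrix.transpose_apply, hccdef]
    have hUUT : U * Uᵀ = 1 := mul_eq_one_comm.mp hU
    have horth : ∑ k, cc k * U j k = 0 := by
      have h1 : (U * Uᵀ) 0 j = 0 := by
        rw [hUUT, Matrix.one_apply_ne (Ne.symm hj)]
      rw [Matrix.mul_apply] at h1
      rw [← h1]
      refine Finset.sum_congr rfl fun k _ => ?_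
      rw [Matrix.transpose_apply, hccdef]
    have hfinal : ∑ k, cc k * d k * U j k = d k₀ * ∑ k, cc k * U j k := by
      rw [Finset.mul_sum]
      refine Finset.sum_congr rfl fun k _ => ?_
      by_cases hk : k = k₀
      · subst hk; ring
      · have : cc k = 0 := by
          have h2 := hcczero k₀ k (Ne.symm hk)
          rcases mul_eq_zero.1 h2 with h3 | h3
          · exact absurd h3 hk₀
          · exact h3
        rw [this]; ring
    rw [hSentry, hfinal, horth, mul_zero]
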